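/- arXiv:0809.1902 — 2 statements merged into one kernel-verified Lean document; each statement's English description precedes it below -/
import Mathlib

section
/- Let (X, ρ) be a finite metric space, π a permutation of X, R > 0, and v ∈ X with ρ(π(i), v) < min_{j < i} ρ(π(j), v) for some index i. Then for every point v_t on a shortest path (i.e., any point v_t with ρ(π(i), v_t) + ρ(v_t, v) = ρ(π(i), v)), we also have ρ(π(i), v_t) < min_{j < i} ρ(π(j), v_t). -/
/-- If `π i` is strictly closer to `v` than every earlier center `π j` (`j < i`), then
`π i` is also strictly closer than every earlier center to any point `vt` lying on a
geodesic from `π i` to `v` (i.e. with `dist (π i) vt + dist vt v = dist (π i) v`). -/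
theorem closest_center_on_geodesic {X : Type*} [MetricSpace X]
    (π : ℕ → X) (i : ℕ) (v vt : X)
    (h : ∀ j < i, dist (π i) v < dist (π j) v)
    (hgeo : dist (π i) vt + dist vt v = dist (π i) v) :
    ∀ j < i, dist (π i) vt < dist (π j) vt := by
  intro j hj
  have htri : dist (π j) v ≤ dist (π j) vt + dist vt v := dist_triangle _ _ _
  have := h j hj
  linarith
end

section
/- Let (P_{-1}, …, P_K) be a random hierarchical partition of a finite metric space (X, ρ) obtained as the common refinement of independent random partitions Q_{-1}, …, Q_K, where each Q_k is 8^k-bounded and satisfies Pr[B(x, β·8^k) ⊆ Q_k(x)] ≥ (|B(x, 8^k/8)| / |B(x, 8^k)|)^{16β} for all x ∈ X and 0 < β < 1/8. Then for every x ∈ X, Pr[for all k, B(x, β·8^k) ⊆ P_k(x)] ≥ |X|^{-16β}. -/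
open MeasureTheory

private lemma prod_div_telescope (f : ℕ → ℝ) (hf : ∀ n, 0 < f n) :
    ∀ n, ∏ i ∈ Finset.range n, f i / f (i + 1) = f 0 / f n := by
  intro n
  induction n with
  | zero => simp [div_self (hf 0).ne']
  | succ n ih =>
    rw [Finset.prod_range_succ, ih, div_mul_div_comm, mul_comm (f 0) (f n),
      mul_div_mul_left _ _ (hf n).ne']

/-- Padding probability of hierarchical CKR partitions (Lemma 3).  Independent random
partitions `Q_k` (one per scale `8^{k-1}`, `k : Fin N`, modeled on independent probability
spaces `Ω k` with the product measure) are `8^{k-1}`-bounded and satisfy the CKR padding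
bound `Pr[B(x, β·8^{k-1}) ⊆ Q_k(x)] ≥ (|B(x, 8^{k-1}/8)|/|B(x, 8^{k-1})|)^{16β}`.
Then the common refinement `P_k(x) = ⋂_{ℓ ≥ k} Q_ℓ(x)` satisfies
`Pr[∀ k, B(x, β·8^{k-1}) ⊆ P_k(x)] ≥ |X|^{-16β}`. -/
theorem hierarchical_padding {X : Type*} [MetricSpace X] [Fintype X]
    (N : ℕ)
    (Ω : Fin N → Type*) [∀ k, MeasurableSpace (Ω k)]
    (μ : ∀ k, Measure (Ω k)) [∀ k, IsProbabilityMeasure (μ k)]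
    (Q : ∀ k : Fin N, Ω k → X → Set X)
    (β : ℝ) (hβ : 0 < β) (hβ' : β < 1 / 8)
    (x : X)
    (hbounded : ∀ (k : Fin N) (ω : Ω k) (y : X), ∀ a ∈ Q k ω y, ∀ b ∈ Q k ω y,
      dist a b ≤ (8 : ℝ) ^ ((k : ℤ) - 1))
    (hpad : ∀ k : Fin N,
      ((Nat.card {y : X | dist x y ≤ (8 : ℝ) ^ ((k : ℤ) - 1) / 8} : ℝ)
          / (Nat.card {y : X | dist x y ≤ (8 : ℝ) ^ ((k : ℤ) - 1)} : ℝ)) ^ (16 * β)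
        ≤ (μ k {ω : Ω k | ∀ y : X, dist x y ≤ β * (8 : ℝ) ^ ((k : ℤ) - 1) →
            y ∈ Q k ω x}).toReal) :
    ((Fintype.card X : ℝ)) ^ (-(16 * β))
      ≤ ((Measure.pi μ) {ω : ∀ k, Ω k | ∀ k : Fin N, ∀ y : X,
          dist x y ≤ β * (8 : ℝ) ^ ((k : ℤ) - 1) →
            y ∈ ⋂ ℓ ∈ {ℓ : Fin N | k ≤ ℓ}, Q ℓ (ω ℓ) x}).toReal := by
  set A : ∀ k : Fin N, Set (Ω k) := fun k =>
    {ω : Ω k | ∀ y : X, dist x y ≤ β * (8 : ℝ) ^ ((k : ℤ) - 1) → y ∈ Q k ω x} with hA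
  -- the event equals a product set
  have hset : {ω : ∀ k, Ω k | ∀ k : Fin N, ∀ y : X,
      dist x y ≤ β * (8 : ℝ) ^ ((k : ℤ) - 1) →
        y ∈ ⋂ ℓ ∈ {ℓ : Fin N | k ≤ ℓ}, Q ℓ (ω ℓ) x} = Set.pi Set.univ A := by
    ext ω
    simp only [Set.mem_setOf_eq, Set.mem_iInter, Set.mem_pi, Set.mem_univ, true_imp_iff, hA]
    constructor
    · intro h ℓ y hy
      exact h ℓ y hy ℓ le_rfl
    · intro h k y hy ℓ hℓ
      refine h ℓ y (hy.trans ?_)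
      have h8 : (8 : ℝ) ^ ((k : ℤ) - 1) ≤ (8 : ℝ) ^ ((ℓ : ℤ) - 1) := by
        apply zpow_le_zpow_right₀ (by norm_num)
        omega
      nlinarith
  rw [hset, Measure.pi_pi]
  -- the balls
  set f : ℕ → ℝ := fun n => (Nat.card {y : X | dist x y ≤ (8 : ℝ) ^ ((n : ℤ) - 2)} : ℝ) with hf
  have hfone : ∀ n, 1 ≤ f n := by
    intro n
    have hne : Nonempty {y : X | dist x y ≤ (8 : ℝ) ^ ((n : ℤ) - 2)} :=
      ⟨x, by simp only [Set.mem_setOf_eq, dist_self]; positivity⟩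
    have h1 : 0 < Nat.card {y : X | dist x y ≤ (8 : ℝ) ^ ((n : ℤ) - 2)} := Nat.card_pos
    simp only [hf]
    exact_mod_cast h1
  have hfpos : ∀ n, 0 < f n := fun n => lt_of_lt_of_le one_pos (hfone n)
  have hfcard : ∀ n, f n ≤ (Fintype.card X : ℝ) := by
    intro n
    have h1 := Nat.card_le_card_of_injective
      (Subtype.val : {y : X | dist x y ≤ (8 : ℝ) ^ ((n : ℤ) - 2)} → X) Subtype.val_injective
    rw [Nat.card_eq_fintype_card (α := X)] at h1
    simp only [hf]
    exact_mod_cast h1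
  -- per-scale lower bound rewritten in terms of f
  have hratio : ∀ k : Fin N,
      (f k / f (k + 1)) ^ (16 * β) ≤ ((μ k) (A k)).toReal := by
    intro k
    have e1 : (8 : ℝ) ^ ((((k : ℕ) : ℤ)) - 2) = (8 : ℝ) ^ ((k : ℤ) - 1) / 8 := by
      rw [show (k : ℤ) - 1 = (((k : ℕ) : ℤ) - 2) + 1 by push_cast; ring,
        zpow_add_one₀ (by norm_num : (8 : ℝ) ≠ 0)]
      ring
    have e2 : ((((k : ℕ) + 1 : ℕ)) : ℤ) - 2 = (k : ℤ) - 1 := by push_cast; ring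
    have goal_eq : (f k / f (k + 1)) ^ (16 * β)
        = ((Nat.card {y : X | dist x y ≤ (8 : ℝ) ^ ((k : ℤ) - 1) / 8} : ℝ)
          / (Nat.card {y : X | dist x y ≤ (8 : ℝ) ^ ((k : ℤ) - 1)} : ℝ)) ^ (16 * β) := by
      simp only [hf, e2, e1]
    rw [goal_eq]
    exact hpad k
  rw [ENNReal.toReal_prod]
  have hstep : ∏ k : Fin N, (f k / f (k + 1)) ^ (16 * β)
      ≤ ∏ k : Fin N, ((μ k) (A k)).toReal := by
    apply Finset.prod_le_prod
    · intro k _; positivity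
    · intro k _; exact hratio k
  refine le_trans ?_ hstep
  have hprodrw : ∏ k : Fin N, (f k / f (k + 1)) ^ (16 * β)
      = (∏ k : Fin N, f k / f (k + 1)) ^ (16 * β) := by
    rw [← Real.finset_prod_rpow]
    intro k _
    positivity
  rw [hprodrw]
  have htel : ∏ k : Fin N, f (k : ℕ) / f ((k : ℕ) + 1) = f 0 / f N := by
    rw [Fin.prod_univ_eq_prod_range (fun i => f i / f (i + 1)) N]
    exact prod_div_telescope f hfpos N
  rw [htel]
  have hcardpos : (0 : ℝ) < (Fintype.card X : ℝ) := by
    have : 0 < Fintype.card X := Fintype.card_pos_iff.mpr ⟨x⟩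
    exact_mod_cast this
  have hfinal : ((Fintype.card X : ℝ))⁻¹ ≤ f 0 / f N := by
    rw [le_div_iff₀ (hfpos N)]
    calc (Fintype.card X : ℝ)⁻¹ * f N ≤ (Fintype.card X : ℝ)⁻¹ * (Fintype.card X : ℝ) :=
          mul_le_mul_of_nonneg_left (hfcard N) (by positivity)
      _ = 1 := inv_mul_cancel₀ hcardpos.ne'
      _ ≤ f 0 := hfone 0
  calc ((Fintype.card X : ℝ)) ^ (-(16 * β))
      = (((Fintype.card X : ℝ))⁻¹) ^ (16 * β) := by
        rw [Real.rpow_neg hcardpos.le, ← Real.inv_rpow hcardpos.le]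
    _ ≤ (f 0 / f N) ^ (16 * β) :=
        Real.rpow_le_rpow (by positivity) hfinal (by positivity)
end
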